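/- The stability region Γ is radially convex (star-shaped with respect to the origin): 0 ∈ Γ, and for every z ∈ Γ and every s ∈ [0, 1], the point s·z belongs to Γ. -/

import Mathlib

open Complex Finset Set Real

noncomputable section

namespace StabAux

variable (m : ℕ) (p : ℕ → ℝ)

/-- The probability generating function `f(w) = ∑ p_j w^j`. -/
def fC (w : ℂ) : ℂ := ∑ j ∈ Finset.range (m+1), (p j : ℂ) * w ^ j
/-- Its derivative. -/
def fd (w : ℂ) : ℂ := ∑ j ∈ Finset.range (m+1), (p j : ℂ) * ((j : ℂ) * w ^ (j-1))
def Qf (j : ℕ) : ℝ := if 2 ≤ j then ((j:ℝ) - 1) * p j else 0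
def pf (j : ℕ) : ℝ := if 2 ≤ j then p j else 0
/-- Polar coordinates point. -/
def Wc (r t : ℝ) : ℂ := (r : ℂ) * Complex.exp ((t : ℂ) * Complex.I)
/-- The continuous argument of `w/f(w)` at `w = r e^{it}`. -/
def Th (r t : ℝ) : ℝ := t - (Complex.log (fC m p (Wc r t))).im

variable {m p}

lemma sum_Qf (hmean : ∑ j ∈ Finset.range (m + 1), (1 - (j : ℝ)) * p j = 0) :
    ∑ j ∈ Finset.range (m+1), Qf p j = p 0 := by
  have h1 : ∑ j ∈ Finset.range (m+1), (((j:ℝ) - 1) * p j) = 0 := by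
    have : ∀ j ∈ Finset.range (m+1), ((j:ℝ) - 1) * p j = -((1 - (j:ℝ)) * p j) := by
      intro j _; ring
    rw [Finset.sum_congr rfl this, Finset.sum_neg_distrib, hmean, neg_zero]
  have h2 : ∀ j ∈ Finset.range (m+1),
      ((j:ℝ) - 1) * p j = Qf p j + (if j = 0 then -(p 0) else 0) := by
    intro j _
    unfold Qf
    match j with
    | 0 => norm_num
    | 1 => norm_num
    | (n+2) => simp [Nat.succ_le_iff]
  rw [Finset.sum_congr rfl h2, Finset.sum_add_distrib, Finset.sum_ite_eq' (Finset.range (m+1)) 0] at h1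
  norm_num at h1
  linarith [h1]

lemma sum_pf (hp_sum : ∑ j ∈ Finset.range (m + 1), p j = 1) (hp1 : p 1 = 0) :
    ∑ j ∈ Finset.range (m+1), pf p j = 1 - p 0 := by
  have h2 : ∀ j ∈ Finset.range (m+1),
      p j = pf p j + (if j = 0 then p 0 else 0) := by
    intro j _
    unfold pf
    match j with
    | 0 => norm_num
    | 1 => simpa using hp1
    | (n+2) => simp [Nat.succ_le_iff]
  rw [Finset.sum_congr rfl h2, Finset.sum_add_distrib, Finset.sum_ite_eq' (Finset.range (m+1)) 0] at hp_sum
  norm_num at hp_sum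
  linarith [hp_sum]

lemma Qf_nonneg (hp_nonneg : ∀ j, 0 ≤ p j) (j : ℕ) : 0 ≤ Qf p j := by
  unfold Qf; split
  · rename_i h
    have : (1:ℝ) ≤ (j:ℝ) - 1 := by
      have : (2:ℝ) ≤ (j:ℝ) := by exact_mod_cast h
      linarith
    nlinarith [hp_nonneg j]
  · exact le_refl 0

lemma pf_le_Qf (hp_nonneg : ∀ j, 0 ≤ p j) (j : ℕ) : pf p j ≤ Qf p j := by
  unfold Qf pf; split
  · rename_i h
    have h2 : (2:ℝ) ≤ (j:ℝ) := by exact_mod_cast h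
    nlinarith [hp_nonneg j]
  · exact le_refl 0

lemma half (hp_nonneg : ∀ j, 0 ≤ p j)
    (hp_sum : ∑ j ∈ Finset.range (m + 1), p j = 1) (hp1 : p 1 = 0)
    (hmean : ∑ j ∈ Finset.range (m + 1), (1 - (j : ℝ)) * p j = 0) :
    1 - p 0 ≤ p 0 := by
  rw [← sum_pf hp_sum hp1, ← sum_Qf hmean]
  exact Finset.sum_le_sum (fun j _ => pf_le_Qf hp_nonneg j)


lemma re_fC_lower (hp_nonneg : ∀ j, 0 ≤ p j)
    (hp_sum : ∑ j ∈ Finset.range (m + 1), p j = 1) (hp1 : p 1 = 0)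
    (hmean : ∑ j ∈ Finset.range (m + 1), (1 - (j : ℝ)) * p j = 0)
    (w : ℂ) (hw : ‖w‖ ≤ 1) :
    p 0 * (1 - (‖w‖)^2) ≤ (fC m p w).re := by
  have habs0 := norm_nonneg w
  have hre : (fC m p w).re = ∑ j ∈ Finset.range (m+1), p j * (w ^ j).re := by
    rw [fC, Complex.re_sum]
    exact Finset.sum_congr rfl (fun j _ => by rw [Complex.re_ofReal_mul])
  have hsplit : ∀ j ∈ Finset.range (m+1),
      p j * (w ^ j).re = pf p j * (w ^ j).re + (if j = 0 then p 0 else 0) := by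
    intro j _
    unfold pf
    match j with
    | 0 => simp
    | 1 => simp [hp1]
    | (n+2) => simp [Nat.succ_le_iff]
  have hterm : ∀ j ∈ Finset.range (m+1),
      -(pf p j * (‖w‖)^2) ≤ pf p j * (w ^ j).re := by
    intro j _
    unfold pf
    split
    · rename_i h2
      have h3 : -((‖w‖)^2) ≤ (w ^ j).re := by
        have h4 : |(w ^ j).re| ≤ ‖w ^ j‖ := Complex.abs_re_le_norm _
        have h5 : ‖w ^ j‖ = (‖w‖)^j := norm_pow _ _
        have h6 : (‖w‖)^j ≤ (‖w‖)^2 :=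
          pow_le_pow_of_le_one habs0 hw h2
        have := neg_abs_le ((w ^ j).re)
        linarith [abs_le.mp h4 |>.1]
      have hpj := hp_nonneg j
      nlinarith
    · simp
  have hsum2 : -((1 - p 0) * (‖w‖)^2) ≤ ∑ j ∈ Finset.range (m+1), pf p j * (w ^ j).re := by
    have := Finset.sum_le_sum hterm
    have heq : ∑ j ∈ Finset.range (m+1), -(pf p j * (‖w‖)^2)
        = -((1 - p 0) * (‖w‖)^2) := by
      rw [Finset.sum_neg_distrib, ← Finset.sum_mul, sum_pf hp_sum hp1]
    linarith [heq ▸ this]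
  have h10 : (fC m p w).re = (∑ j ∈ Finset.range (m+1), pf p j * (w ^ j).re) + p 0 := by
    rw [hre, Finset.sum_congr rfl hsplit, Finset.sum_add_distrib,
      Finset.sum_ite_eq' (Finset.range (m+1)) 0]
    norm_num
  have hhalf : 1 - p 0 ≤ p 0 := half hp_nonneg hp_sum hp1 hmean
  have hsq : (‖w‖)^2 ≤ 1 := by nlinarith
  nlinarith [hsum2]

lemma abs_fC_le_one (hp_nonneg : ∀ j, 0 ≤ p j)
    (hp_sum : ∑ j ∈ Finset.range (m + 1), p j = 1)
    (w : ℂ) (hw : ‖w‖ ≤ 1) :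
    ‖fC m p w‖ ≤ 1 := by
  have habs0 := norm_nonneg w
  calc ‖fC m p w‖ ≤ ∑ j ∈ Finset.range (m+1), ‖(p j : ℂ) * w ^ j‖ :=
        norm_sum_le _ _
    _ ≤ ∑ j ∈ Finset.range (m+1), p j := by
        apply Finset.sum_le_sum
        intro j _
        rw [norm_mul, norm_pow, Complex.norm_real, Real.norm_eq_abs, _root_.abs_of_nonneg (hp_nonneg j)]
        have : (‖w‖)^j ≤ 1 := pow_le_one₀ habs0 hw
        nlinarith [hp_nonneg j]
    _ = 1 := hp_sum


lemma H_ident (hmean : ∑ j ∈ Finset.range (m + 1), (1 - (j : ℝ)) * p j = 0) (w : ℂ) :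
    fC m p w - w * fd m p w = ∑ j ∈ Finset.range (m+1), (Qf p j : ℂ) * (1 - w ^ j) := by
  have hQ : (↑(p 0) : ℂ) = ∑ j ∈ Finset.range (m+1), (Qf p j : ℂ) := by
    rw [← Complex.ofReal_sum, sum_Qf hmean]
  have step1 : fC m p w - w * fd m p w
      = ∑ j ∈ Finset.range (m+1), (p j : ℂ) * ((1:ℂ) - (j:ℂ)) * w ^ j := by
    rw [fC, fd, Finset.mul_sum, ← Finset.sum_sub_distrib]
    apply Finset.sum_congr rfl
    intro j _
    match j with
    | 0 => simp
    | (n+1) =>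
      have h : w * w ^ n = w ^ (n+1) := (pow_succ' w n).symm
      have h2 : (n+1) - 1 = n := by omega
      rw [h2]
      push_cast
      rw [← h]
      ring
  have step2 : ∑ j ∈ Finset.range (m+1), ((p j : ℂ) * ((1:ℂ) - (j:ℂ)) * w ^ j + (Qf p j : ℂ) * w ^ j)
      = (↑(p 0) : ℂ) := by
    rw [Finset.sum_eq_single 0]
    · simp [Qf]
    · intro j _ hj
      match j with
      | 0 => exact absurd rfl hj
      | 1 => simp [Qf]
      | (n+2) =>
        have : (Qf p (n+2) : ℂ) = ((n+2:ℕ):ℂ) * (p (n+2):ℂ) - (p (n+2):ℂ) := by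
          unfold Qf
          rw [if_pos (by omega)]
          push_cast
          ring
        rw [this]
        ring
    · intro h; exact absurd (Finset.mem_range.mpr (Nat.succ_pos m)) h
  rw [step1]
  have expand : ∑ j ∈ Finset.range (m+1), (Qf p j : ℂ) * (1 - w ^ j)
      = (∑ j ∈ Finset.range (m+1), (Qf p j : ℂ)) - ∑ j ∈ Finset.range (m+1), (Qf p j : ℂ) * w ^ j := by
    rw [← Finset.sum_sub_distrib]
    exact Finset.sum_congr rfl (fun j _ => by ring)
  rw [expand, ← hQ, ← step2, Finset.sum_add_distrib]
  ring

lemma Epure (a b u : ℝ) (ha : 1 ≤ a) (hb : 1 ≤ b) (A B : ℂ)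
    (hu0 : 0 ≤ u) (hu : u ≤ 1)
    (hA : ‖A‖ ≤ u^2) (hB : ‖B‖ ≤ u^2) :
    2 * (1 - u^2) * (a * b) ≤
      a * b * ((1 - A).re) + a * ((1 - A) * (starRingEnd ℂ) B).re
      + a * b * ((1 - B).re) + b * ((1 - B) * (starRingEnd ℂ) A).re := by
  set x := A.re with hx
  set y := B.re with hy
  set P := (A * (starRingEnd ℂ) B).re with hP
  have e1 : (1 - A).re = 1 - x := by simp [hx]
  have e2 : (1 - B).re = 1 - y := by simp [hy]
  have e3 : ((1 - A) * (starRingEnd ℂ) B).re = y - P := by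
    rw [sub_mul, one_mul, Complex.sub_re, Complex.conj_re, hP]
  have e4 : ((1 - B) * (starRingEnd ℂ) A).re = x - P := by
    have hcc : (B * (starRingEnd ℂ) A).re = P := by
      rw [hP, ← Complex.conj_re (A * (starRingEnd ℂ) B), map_mul, Complex.conj_conj]
      ring_nf
    rw [sub_mul, one_mul, Complex.sub_re, Complex.conj_re, hcc]
  have hu2 : u^2 ≤ 1 := by nlinarith
  have hxu : x ≤ u^2 := le_trans (Complex.re_le_norm A) hA
  have hyu : y ≤ u^2 := le_trans (Complex.re_le_norm B) hB
  have hPu : P ≤ u^2 := by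
    have h1 : P ≤ ‖A * (starRingEnd ℂ) B‖ := Complex.re_le_norm _
    have h2 : ‖A * (starRingEnd ℂ) B‖ = ‖A‖ * ‖B‖ := by
      rw [norm_mul, Complex.norm_conj]
    nlinarith [norm_nonneg A, norm_nonneg B]
  rw [e1, e2, e3, e4]
  nlinarith [mul_nonneg (mul_nonneg (by linarith : (0:ℝ) ≤ b) (by linarith : 0 ≤ a - 1)) (by linarith : 0 ≤ u^2 - x),
    mul_nonneg (mul_nonneg (by linarith : (0:ℝ) ≤ a) (by linarith : 0 ≤ b - 1)) (by linarith : 0 ≤ u^2 - y),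
    mul_nonneg (by linarith : (0:ℝ) ≤ a + b) (by linarith : 0 ≤ u^2 - P)]


lemma T_bound (hp_nonneg : ∀ j, 0 ≤ p j) (hp1 : p 1 = 0)
    (hmean : ∑ j ∈ Finset.range (m + 1), (1 - (j : ℝ)) * p j = 0)
    (w : ℂ) (hw : ‖w‖ ≤ 1) :
    (1 - (‖w‖)^2) * (p 0)^2 ≤
      ((fC m p w - w * fd m p w) * (starRingEnd ℂ) (fC m p w)).re := by
  have habs0 := norm_nonneg w
  set u := ‖w‖ with hu
  set S := Finset.range (m+1) with hS
  set R : ℕ → ℕ → ℝ := fun j k => ((1 - w^j) * (starRingEnd ℂ) (w^k)).re with hR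
  -- expand T as double sum
  have hT : ((fC m p w - w * fd m p w) * (starRingEnd ℂ) (fC m p w)).re
      = ∑ j ∈ S, ∑ k ∈ S, Qf p j * p k * R j k := by
    rw [H_ident hmean, fC, map_sum, Finset.sum_mul_sum, Complex.re_sum]
    apply Finset.sum_congr rfl
    intro j _
    rw [Complex.re_sum]
    apply Finset.sum_congr rfl
    intro k _
    have : (Qf p j : ℂ) * (1 - w ^ j) * (starRingEnd ℂ) ((p k : ℂ) * w ^ k)
        = ((Qf p j * p k : ℝ) : ℂ) * ((1 - w^j) * (starRingEnd ℂ) (w^k)) := by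
      rw [map_mul, Complex.conj_ofReal]
      push_cast
      ring
    rw [this, Complex.re_ofReal_mul]
  -- replace p k by pf k plus the k = 0 contribution, then p 0 by ∑ Qf
  have hinner : ∀ j ∈ S, ∑ k ∈ S, Qf p j * p k * R j k
      = ∑ k ∈ S, (Qf p j * Qf p k * (1 - w^j).re + Qf p j * pf p k * R j k) := by
    intro j _
    have h1 : ∀ k ∈ S, Qf p j * p k * R j k
        = Qf p j * pf p k * R j k + (if k = 0 then Qf p j * (1 - w^j).re * p 0 else 0) := by
      intro k _
      match k with
      | 0 =>
        have : R j 0 = (1 - w^j).re := by rw [hR]; simp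
        simp only [if_pos rfl, this]
        unfold pf; norm_num; ring
      | 1 => unfold pf; simp [hp1]
      | (n+2) => unfold pf; simp [Nat.succ_le_iff]
    have h0S : (0:ℕ) ∈ S := Finset.mem_range.mpr (Nat.succ_pos m)
    rw [Finset.sum_congr rfl h1, Finset.sum_add_distrib,
      Finset.sum_ite_eq' S 0, if_pos h0S, Finset.sum_add_distrib]
    have e1 : ∑ k ∈ S, Qf p j * Qf p k * (1 - w^j).re
        = (Qf p j * (1 - w^j).re) * ∑ k ∈ S, Qf p k := by
      rw [Finset.mul_sum]
      exact Finset.sum_congr rfl (fun k _ => by ring)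
    rw [e1, sum_Qf hmean]
    ring
  -- symmetrize
  set G : ℕ → ℕ → ℝ := fun j k => Qf p j * Qf p k * (1 - w^j).re + Qf p j * pf p k * R j k with hG
  have hT2 : ((fC m p w - w * fd m p w) * (starRingEnd ℂ) (fC m p w)).re
      = ∑ j ∈ S, ∑ k ∈ S, G j k := by
    rw [hT, Finset.sum_congr rfl hinner]
  have hterm : ∀ j ∈ S, ∀ k ∈ S,
      2 * (1 - u^2) * (Qf p j * Qf p k) ≤ G j k + G k j := by
    intro j _ k _
    by_cases hj : 2 ≤ j
    · by_cases hk : 2 ≤ k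
      · have hQj : Qf p j = ((j:ℝ) - 1) * p j := if_pos hj
        have hQk : Qf p k = ((k:ℝ) - 1) * p k := if_pos hk
        have hpfj : pf p j = p j := if_pos hj
        have hpfk : pf p k = p k := if_pos hk
        have ha : (1:ℝ) ≤ (j:ℝ) - 1 := by
          have : (2:ℝ) ≤ (j:ℝ) := by exact_mod_cast hj
          linarith
        have hb : (1:ℝ) ≤ (k:ℝ) - 1 := by
          have : (2:ℝ) ≤ (k:ℝ) := by exact_mod_cast hk
          linarith
        have hA : ‖w^j‖ ≤ u^2 := by
          rw [norm_pow]
          exact pow_le_pow_of_le_one habs0 hw hj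
        have hB : ‖w^k‖ ≤ u^2 := by
          rw [norm_pow]
          exact pow_le_pow_of_le_one habs0 hw hk
        have key := Epure ((j:ℝ)-1) ((k:ℝ)-1) u ha hb (w^j) (w^k) habs0 hw hA hB
        have hpp : 0 ≤ p j * p k := mul_nonneg (hp_nonneg j) (hp_nonneg k)
        have := mul_le_mul_of_nonneg_left key hpp
        rw [hG]
        simp only [hQj, hQk, hpfj, hpfk, hR]
        nlinarith [this]
      · have hQk : Qf p k = 0 := if_neg hk
        have hpfk : pf p k = 0 := if_neg hk
        rw [hG]
        simp [hQk, hpfk]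
    · have hQj : Qf p j = 0 := if_neg hj
      have hpfj : pf p j = 0 := if_neg hj
      rw [hG]
      simp [hQj, hpfj]
  have hsum : ∑ j ∈ S, ∑ k ∈ S, (2 * (1 - u^2) * (Qf p j * Qf p k))
      ≤ ∑ j ∈ S, ∑ k ∈ S, (G j k + G k j) :=
    Finset.sum_le_sum (fun j hj => Finset.sum_le_sum (fun k hk => hterm j hj k hk))
  have hL : ∑ j ∈ S, ∑ k ∈ S, (2 * (1 - u^2) * (Qf p j * Qf p k))
      = 2 * (1 - u^2) * (p 0)^2 := by
    have : ∑ j ∈ S, ∑ k ∈ S, (2 * (1 - u^2) * (Qf p j * Qf p k))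
        = 2 * (1 - u^2) * ((∑ j ∈ S, Qf p j) * (∑ k ∈ S, Qf p k)) := by
      rw [Finset.sum_mul_sum, Finset.mul_sum]
      apply Finset.sum_congr rfl
      intro j _
      rw [Finset.mul_sum]
    rw [this, sum_Qf hmean]
    ring
  have hRsum : ∑ j ∈ S, ∑ k ∈ S, (G j k + G k j)
      = 2 * (∑ j ∈ S, ∑ k ∈ S, G j k) := by
    have swap : ∑ j ∈ S, ∑ k ∈ S, G k j = ∑ j ∈ S, ∑ k ∈ S, G j k := Finset.sum_comm
    have : ∀ j ∈ S, ∑ k ∈ S, (G j k + G k j) = (∑ k ∈ S, G j k) + ∑ k ∈ S, G k j :=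
      fun j _ => Finset.sum_add_distrib
    rw [Finset.sum_congr rfl this, Finset.sum_add_distrib, swap]
    ring
  rw [hL, hRsum] at hsum
  rw [hT2]
  linarith


lemma hasDerivAt_fC (w : ℂ) : HasDerivAt (fC m p) (fd m p w) w := by
  rw [show fd m p w = ∑ j ∈ Finset.range (m+1), (p j : ℂ) * ((j:ℂ) * w ^ (j-1)) from rfl]
  apply HasDerivAt.fun_sum
  intro j _
  exact (hasDerivAt_pow j w).const_mul _

lemma continuous_fC : Continuous (fC m p) := by
  apply continuous_finset_sum
  intro j _
  exact continuous_const.mul (continuous_pow j)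

lemma abs_Wc (r t : ℝ) (hr : 0 ≤ r) : ‖Wc r t‖ = r := by
  rw [Wc, norm_mul, Complex.norm_real, Complex.norm_exp_ofReal_mul_I, mul_one, Real.norm_eq_abs, _root_.abs_of_nonneg hr]

lemma fC_pos_re (hp_nonneg : ∀ j, 0 ≤ p j)
    (hp_sum : ∑ j ∈ Finset.range (m + 1), p j = 1)
    (hp0 : 0 < p 0) (hp1 : p 1 = 0)
    (hmean : ∑ j ∈ Finset.range (m + 1), (1 - (j : ℝ)) * p j = 0)
    (w : ℂ) (hw : ‖w‖ < 1) : 0 < (fC m p w).re := by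
  have h1 := re_fC_lower hp_nonneg hp_sum hp1 hmean w hw.le
  have h2 : 0 < p 0 := hp0
  have h3 : (‖w‖)^2 < 1 := by nlinarith [norm_nonneg w]
  nlinarith

lemma fC_ne_zero (hp_nonneg : ∀ j, 0 ≤ p j)
    (hp_sum : ∑ j ∈ Finset.range (m + 1), p j = 1)
    (hp0 : 0 < p 0) (hp1 : p 1 = 0)
    (hmean : ∑ j ∈ Finset.range (m + 1), (1 - (j : ℝ)) * p j = 0)
    (w : ℂ) (hw : ‖w‖ < 1) : fC m p w ≠ 0 := by
  intro h
  have := fC_pos_re hp_nonneg hp_sum hp0 hp1 hmean w hw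
  rw [h] at this
  simp at this

lemma fC_slit (hp_nonneg : ∀ j, 0 ≤ p j)
    (hp_sum : ∑ j ∈ Finset.range (m + 1), p j = 1)
    (hp0 : 0 < p 0) (hp1 : p 1 = 0)
    (hmean : ∑ j ∈ Finset.range (m + 1), (1 - (j : ℝ)) * p j = 0)
    (w : ℂ) (hw : ‖w‖ < 1) : fC m p w ∈ Complex.slitPlane :=
  Complex.mem_slitPlane_iff.mpr (Or.inl (fC_pos_re hp_nonneg hp_sum hp0 hp1 hmean w hw))

lemma Wc_hasDeriv (r t : ℝ) : HasDerivAt (fun u : ℝ => Wc r u) (Wc r t * Complex.I) t := by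
  have A := (((hasDerivAt_id ((t:ℝ):ℂ)).mul_const Complex.I).cexp).const_mul ((r:ℝ):ℂ)
  have B := A.comp_ofReal
  simp only [id] at B
  have : HasDerivAt (fun u : ℝ => Wc r u) ((r:ℂ) * (Complex.exp ((t:ℂ) * Complex.I) * (1 * Complex.I))) t := B
  convert this using 1
  rw [Wc]; ring

lemma Th_hasDeriv (hp_nonneg : ∀ j, 0 ≤ p j)
    (hp_sum : ∑ j ∈ Finset.range (m + 1), p j = 1)
    (hp0 : 0 < p 0) (hp1 : p 1 = 0)
    (hmean : ∑ j ∈ Finset.range (m + 1), (1 - (j : ℝ)) * p j = 0)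
    (r : ℝ) (hr0 : 0 < r) (hr1 : r < 1) (t : ℝ) :
    ∃ d : ℝ, HasDerivAt (Th m p r) d t ∧ (1 - r^2) * (p 0)^2 ≤ d := by
  set w := Wc r t with hwdef
  have hwabs : ‖w‖ = r := abs_Wc r t hr0.le
  have hwlt : ‖w‖ < 1 := by rw [hwabs]; exact hr1
  have hslit := fC_slit hp_nonneg hp_sum hp0 hp1 hmean w hwlt
  have hne := fC_ne_zero hp_nonneg hp_sum hp0 hp1 hmean w hwlt
  -- derivative of t ↦ log (fC (Wc r t))
  have h1 : HasDerivAt (fun u : ℝ => fC m p (Wc r u)) (fd m p w * (w * Complex.I)) t := by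
    have hin := Wc_hasDeriv r t
    have h1' := HasDerivAt.scomp (𝕜 := ℝ) (𝕜' := ℂ) t (hasDerivAt_fC (p := p) (m := m) w) hin
    exact h1'.congr_deriv (by rw [smul_eq_mul]; ring)
  have h2 : HasDerivAt (fun u : ℝ => Complex.log (fC m p (Wc r u)))
      ((fd m p w * (w * Complex.I)) / fC m p w) t := h1.clog_real hslit
  have h3 : HasDerivAt (fun u : ℝ => (Complex.log (fC m p (Wc r u))).im)
      (((fd m p w * (w * Complex.I)) / fC m p w).im) t :=
    (Complex.imCLM.hasFDerivAt.comp_hasDerivAt t h2)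
  have h4 : HasDerivAt (Th m p r)
      (1 - ((fd m p w * (w * Complex.I)) / fC m p w).im) t := by
    have := (hasDerivAt_id t).sub h3
    exact this
  refine ⟨_, h4, ?_⟩
  -- positivity
  set ζ := fC m p w with hz
  set n := Complex.normSq ζ with hn
  have hnpos : 0 < n := Complex.normSq_pos.mpr hne
  have hn1 : n ≤ 1 := by
    rw [hn, Complex.normSq_eq_norm_sq]
    have := abs_fC_le_one hp_nonneg hp_sum w hwlt.le
    nlinarith [norm_nonneg ζ]
  set X := ((ζ - w * fd m p w) * (starRingEnd ℂ) ζ).re with hXdef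
  have hX : (1 - r^2) * (p 0)^2 ≤ X := by
    have := T_bound hp_nonneg hp1 hmean w hwlt.le
    rw [hwabs] at this
    exact this
  have hXpos : 0 ≤ X := by
    have hr2 : r^2 ≤ 1 := by nlinarith
    have h0 : (0:ℝ) ≤ (1 - r^2) * (p 0)^2 := mul_nonneg (by linarith) (sq_nonneg _)
    linarith
  have hmulconj : (ζ * (starRingEnd ℂ) ζ).re = n := by
    rw [Complex.mul_conj, hn, Complex.ofReal_re]
  have hexpand : X = n - (w * fd m p w * (starRingEnd ℂ) ζ).re := by
    rw [hXdef, sub_mul, Complex.sub_re, hmulconj]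
  have him : ((fd m p w * (w * Complex.I)) / ζ).im
      = (w * fd m p w * (starRingEnd ℂ) ζ).re * n⁻¹ := by
    rw [div_eq_mul_inv, Complex.inv_def, ← hn]
    have e1 : fd m p w * (w * Complex.I) * ((starRingEnd ℂ) ζ * ((n⁻¹ : ℝ) : ℂ))
        = ((n⁻¹ : ℝ) : ℂ) * ((w * fd m p w * (starRingEnd ℂ) ζ) * Complex.I) := by
      push_cast
      ring
    rw [show ((Complex.normSq ζ)⁻¹ : ℝ) = (n⁻¹ : ℝ) by rw [hn], e1,
      Complex.im_ofReal_mul, Complex.mul_I_im]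
    ring
  rw [him]
  have hrw : (w * fd m p w * (starRingEnd ℂ) ζ).re = n - X := by
    rw [hexpand]; ring
  rw [hrw]
  have e2 : 1 - (n - X) * n⁻¹ = X / n := by
    rw [sub_mul, mul_inv_cancel₀ hnpos.ne', div_eq_mul_inv]; ring
  rw [e2, le_div_iff₀ hnpos]
  nlinarith


lemma psi_eq (r : ℂ) (hr : r ≠ 0) :
    ∑ j ∈ Finset.range (m+1), (p j : ℂ) * r ^ ((1:ℤ) - (j:ℤ)) = r * fC m p r⁻¹ := by
  rw [fC, Finset.mul_sum]
  apply Finset.sum_congr rfl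
  intro j _
  rw [zpow_sub₀ hr, zpow_one, zpow_natCast, div_eq_mul_inv, ← inv_pow]
  ring

lemma Th_cont (hp_nonneg : ∀ j, 0 ≤ p j)
    (hp_sum : ∑ j ∈ Finset.range (m + 1), p j = 1)
    (hp0 : 0 < p 0) (hp1 : p 1 = 0)
    (hmean : ∑ j ∈ Finset.range (m + 1), (1 - (j : ℝ)) * p j = 0)
    (r : ℝ) (hr0 : 0 < r) (hr1 : r < 1) : Continuous (Th m p r) := by
  rw [continuous_iff_continuousAt]
  intro t
  obtain ⟨d, hd, _⟩ := Th_hasDeriv hp_nonneg hp_sum hp0 hp1 hmean r hr0 hr1 t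
  exact hd.continuousAt

lemma Th_strictMono (hp_nonneg : ∀ j, 0 ≤ p j)
    (hp_sum : ∑ j ∈ Finset.range (m + 1), p j = 1)
    (hp0 : 0 < p 0) (hp1 : p 1 = 0)
    (hmean : ∑ j ∈ Finset.range (m + 1), (1 - (j : ℝ)) * p j = 0)
    (r : ℝ) (hr0 : 0 < r) (hr1 : r < 1) : StrictMono (Th m p r) := by
  apply strictMono_of_deriv_pos
  intro t
  obtain ⟨d, hd, hge⟩ := Th_hasDeriv hp_nonneg hp_sum hp0 hp1 hmean r hr0 hr1 t
  rw [hd.deriv]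
  have h1 : 0 < (1 - r^2) * (p 0)^2 := by
    have h2 : r^2 < 1 := by nlinarith
    exact mul_pos (by linarith) (pow_pos hp0 2)
  linarith

lemma Th_dist (r t : ℝ) : |Th m p r t - t| ≤ π := by
  have : Th m p r t - t = -((Complex.log (fC m p (Wc r t))).im) := by rw [Th]; ring
  rw [this, abs_neg, Complex.log_im]
  exact Complex.abs_arg_le_pi _

lemma Th_shift (r t : ℝ) : Th m p r (t + 2*π) = Th m p r t + 2*π := by
  have hW : Wc r (t + 2*π) = Wc r t := by
    rw [Wc, Wc]
    have : ((t + 2*π : ℝ) : ℂ) * Complex.I = (t:ℂ)*Complex.I + 2*(π:ℂ)*Complex.I := by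
      push_cast; ring
    rw [this, Complex.exp_add, Complex.exp_two_pi_mul_I, mul_one]
  rw [Th, Th, hW]; ring

lemma tf_exists (hp_nonneg : ∀ j, 0 ≤ p j)
    (hp_sum : ∑ j ∈ Finset.range (m + 1), p j = 1)
    (hp0 : 0 < p 0) (hp1 : p 1 = 0)
    (hmean : ∑ j ∈ Finset.range (m + 1), (1 - (j : ℝ)) * p j = 0)
    (r : ℝ) (hr0 : 0 < r) (hr1 : r < 1) (α : ℝ) :
    ∃ t, Th m p r t = α := by
  have hpi := Real.pi_pos
  have hc := Th_cont hp_nonneg hp_sum hp0 hp1 hmean r hr0 hr1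
  have h1 : Th m p r (α - 2*π) ≤ α := by
    have := Th_dist (m := m) (p := p) r (α - 2*π)
    have := abs_le.mp this
    linarith [this.2]
  have h2 : α ≤ Th m p r (α + 2*π) := by
    have := Th_dist (m := m) (p := p) r (α + 2*π)
    have := abs_le.mp this
    linarith [this.1]
  have hsub := intermediate_value_Icc (by linarith : α - 2*π ≤ α + 2*π) hc.continuousOn
  obtain ⟨t, _, ht⟩ := hsub ⟨h1, h2⟩
  exact ⟨t, ht⟩

lemma Th_contAt_r (hp_nonneg : ∀ j, 0 ≤ p j)
    (hp_sum : ∑ j ∈ Finset.range (m + 1), p j = 1)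
    (hp0 : 0 < p 0) (hp1 : p 1 = 0)
    (hmean : ∑ j ∈ Finset.range (m + 1), (1 - (j : ℝ)) * p j = 0)
    (t : ℝ) (r0 : ℝ) (hr0 : 0 < r0) (hr1 : r0 < 1) :
    ContinuousAt (fun r : ℝ => Th m p r t) r0 := by
  have hW : ContinuousAt (fun r : ℝ => Wc r t) r0 := by
    apply Continuous.continuousAt
    exact (Complex.continuous_ofReal).mul continuous_const
  have hfc : ContinuousAt (fun r : ℝ => fC m p (Wc r t)) r0 :=
    (continuous_fC (m := m) (p := p)).continuousAt.comp hW
  have hslit : fC m p (Wc r0 t) ∈ Complex.slitPlane := by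
    apply fC_slit hp_nonneg hp_sum hp0 hp1 hmean
    rw [abs_Wc r0 t hr0.le]; exact hr1
  have hlog := ContinuousAt.comp (x := r0) (f := fun r : ℝ => fC m p (Wc r t))
    (continuousAt_clog hslit) hfc
  exact continuousAt_const.sub (Complex.continuous_im.continuousAt.comp hlog)


theorem main {m : ℕ} {p : ℕ → ℝ}
    (hm : 2 ≤ m)
    (hp_nonneg : ∀ j, 0 ≤ p j)
    (hp_sum : ∑ j ∈ Finset.range (m + 1), p j = 1)
    (hp0 : 0 < p 0)
    (hp1 : p 1 = 0)
    (hmean : ∑ j ∈ Finset.range (m + 1), (1 - (j : ℝ)) * p j = 0)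
    (Γ : Set ℂ)
    (hΓ : Γ = {z : ℂ | ∀ r : ℂ, 1 < ‖r‖ →
      z ≠ ∑ j ∈ Finset.range (m + 1), (p j : ℂ) * r ^ ((1 : ℤ) - (j : ℤ))}) :
    (0 : ℂ) ∈ Γ ∧ ∀ z ∈ Γ, ∀ s : ℝ, s ∈ Set.Icc (0 : ℝ) 1 → (s : ℂ) * z ∈ Γ := by
  subst hΓ
  have hzero : (0 : ℂ) ∈ {z : ℂ | ∀ r : ℂ, 1 < ‖r‖ →
      z ≠ ∑ j ∈ Finset.range (m + 1), (p j : ℂ) * r ^ ((1 : ℤ) - (j : ℤ))} := by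
    intro r hr
    have hrne : r ≠ 0 := by
      intro h; rw [h] at hr; simp at hr; linarith
    have hinv : ‖r⁻¹‖ < 1 := by
      rw [norm_inv]
      exact inv_lt_one_of_one_lt₀ hr
    rw [psi_eq (p := p) (m := m) r hrne]
    exact (mul_ne_zero hrne (fC_ne_zero hp_nonneg hp_sum hp0 hp1 hmean r⁻¹ hinv)).symm
  refine ⟨hzero, ?_⟩
  intro z hz s hs
  simp only [Set.mem_setOf_eq] at hz
  rcases eq_or_lt_of_le hs.1 with hs0 | hs0
  · rw [← hs0]; simpa using hzero
  rcases eq_or_lt_of_le hs.2 with hs1 | hs1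
  · rw [hs1]; simpa using hz
  -- main case 0 < s < 1
  by_contra hcon
  simp only [Set.mem_setOf_eq] at hcon
  push_neg at hcon
  obtain ⟨rh, hrh, heq⟩ := hcon
  have hrne : rh ≠ 0 := by
    intro h; rw [h] at hrh; simp at hrh; linarith
  set w1 : ℂ := rh⁻¹ with hw1def
  have hw1ne : w1 ≠ 0 := inv_ne_zero hrne
  set r1 : ℝ := ‖w1‖ with hr1def
  set θ1 : ℝ := Complex.arg w1 with hθ1def
  have hr1pos : 0 < r1 := norm_pos_iff.mpr hw1ne
  have hr1lt : r1 < 1 := by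
    rw [hr1def, hw1def, norm_inv]
    exact inv_lt_one_of_one_lt₀ hrh
  have hfw1 : fC m p w1 = (↑s * z) * w1 := by
    have h1 : (↑s : ℂ) * z = rh * fC m p w1 := by
      rw [heq, psi_eq (p := p) (m := m) rh hrne]
    rw [h1, hw1def]
    field_simp
  have hfw1ne : fC m p w1 ≠ 0 := fC_ne_zero hp_nonneg hp_sum hp0 hp1 hmean w1 (by rw [← hr1def]; exact hr1lt)
  have hsC : (↑s : ℂ) ≠ 0 := by
    simp only [ne_eq, Complex.ofReal_eq_zero]; linarith
  have hzne : z ≠ 0 := by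
    intro h; rw [h] at hfw1; simp at hfw1; exact hfw1ne hfw1
  have hW1 : Wc r1 θ1 = w1 := by
    rw [Wc, hr1def, hθ1def]
    exact Complex.norm_mul_exp_arg_mul_I w1
  set α : ℝ := Th m p r1 θ1 with hαdef
  have hex : ∀ r : ℝ, r ∈ Set.Ioc (0:ℝ) r1 → ∃ t, Th m p r t = α :=
    fun r hr => tf_exists hp_nonneg hp_sum hp0 hp1 hmean r hr.1 (lt_of_le_of_lt hr.2 hr1lt) α
  choose! tf htf using hex
  have hmemr1 : r1 ∈ Set.Ioc (0:ℝ) r1 := ⟨hr1pos, le_refl _⟩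
  have htf1 : tf r1 = θ1 := by
    have h1 : Th m p r1 (tf r1) = α := htf r1 hmemr1
    exact (Th_strictMono hp_nonneg hp_sum hp0 hp1 hmean r1 hr1pos hr1lt).injective (h1.trans rfl)
  -- the modulus function
  set M : ℝ → ℝ := fun r => r / ‖fC m p (Wc r (tf r))‖ with hMdef
  set c0 : ℝ := p 0 * (1 - r1^2) with hc0def
  have hc0pos : 0 < c0 := by
    have : r1^2 < 1 := by nlinarith
    have := hp0
    rw [hc0def]; nlinarith
  have habslow : ∀ r, r ∈ Set.Ioc (0:ℝ) r1 → ∀ t : ℝ,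
      c0 ≤ ‖fC m p (Wc r t)‖ := by
    intro r hr t
    have hwa : ‖Wc r t‖ = r := abs_Wc r t hr.1.le
    have h1 := re_fC_lower hp_nonneg hp_sum hp1 hmean (Wc r t)
      (by rw [hwa]; exact le_of_lt (lt_of_le_of_lt hr.2 hr1lt))
    rw [hwa] at h1
    have h2 : p 0 * (1 - r1^2) ≤ p 0 * (1 - r^2) := by
      have : r^2 ≤ r1^2 := by nlinarith [hr.1.le, hr.2]
      nlinarith [hp0]
    have h3 : (fC m p (Wc r t)).re ≤ ‖fC m p (Wc r t)‖ := Complex.re_le_norm _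
    rw [hc0def]; linarith
  have hfCne : ∀ r, r ∈ Set.Ioc (0:ℝ) r1 → ∀ t : ℝ, fC m p (Wc r t) ≠ 0 := by
    intro r hr t
    apply fC_ne_zero hp_nonneg hp_sum hp0 hp1 hmean
    rw [abs_Wc r t hr.1.le]
    exact lt_of_le_of_lt hr.2 hr1lt
  have hMpos : ∀ r, r ∈ Set.Ioc (0:ℝ) r1 → 0 < M r := by
    intro r hr
    rw [hMdef]
    apply div_pos hr.1
    exact lt_of_lt_of_le hc0pos (habslow r hr (tf r))
  have hMle : ∀ r, r ∈ Set.Ioc (0:ℝ) r1 → M r ≤ r / c0 := by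
    intro r hr
    rw [hMdef]
    apply div_le_div_of_nonneg_left hr.1.le hc0pos (habslow r hr (tf r))
  set v : ℝ := s * M r1 with hvdef
  have hvpos : 0 < v := mul_pos hs0 (hMpos r1 hmemr1)
  set r2 : ℝ := min r1 (v * c0) with hr2def
  have hr2pos : 0 < r2 := lt_min hr1pos (mul_pos hvpos hc0pos)
  have hr2le : r2 ≤ r1 := min_le_left _ _
  have hr2mem : r2 ∈ Set.Ioc (0:ℝ) r1 := ⟨hr2pos, hr2le⟩
  have hMr2 : M r2 ≤ v := by
    have h1 := hMle r2 hr2mem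
    have h2 : r2 / c0 ≤ (v * c0) / c0 := by
      gcongr
      exact min_le_right _ _
    rw [mul_div_cancel_right₀ v (ne_of_gt hc0pos)] at h2
    linarith
  have hMr1v : v ≤ M r1 := by
    have := hMpos r1 hmemr1
    rw [hvdef]; nlinarith [hs.2]
  -- continuity of tf on Icc r2 r1
  have hmemIcc : ∀ x ∈ Set.Icc r2 r1, x ∈ Set.Ioc (0:ℝ) r1 :=
    fun x hx => ⟨lt_of_lt_of_le hr2pos hx.1, hx.2⟩
  have htfc : ContinuousOn tf (Set.Icc r2 r1) := by
    intro r0 hr0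
    have hr0' : r0 ∈ Set.Ioc (0:ℝ) r1 := hmemIcc r0 hr0
    have hr0lt : r0 < 1 := lt_of_le_of_lt hr0'.2 hr1lt
    rw [Metric.continuousWithinAt_iff]
    intro ε hε
    set t0 := tf r0 with ht0
    have hto : Th m p r0 t0 = α := htf r0 hr0'
    have hmono := fun (r : ℝ) (hr : r ∈ Set.Ioc (0:ℝ) r1) =>
      Th_strictMono hp_nonneg hp_sum hp0 hp1 hmean r hr.1 (lt_of_le_of_lt hr.2 hr1lt)
    have h1 : Th m p r0 (t0 - ε) < α := by
      rw [← hto]; exact hmono r0 hr0' (by linarith)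
    have h2 : α < Th m p r0 (t0 + ε) := by
      rw [← hto]; exact hmono r0 hr0' (by linarith)
    have e1 : ∀ᶠ x in nhds r0, Th m p x (t0 - ε) < α :=
      (Th_contAt_r hp_nonneg hp_sum hp0 hp1 hmean (t0 - ε) r0 hr0'.1 hr0lt).tendsto.eventually_lt_const h1
    have e2 : ∀ᶠ x in nhds r0, α < Th m p x (t0 + ε) :=
      (Th_contAt_r hp_nonneg hp_sum hp0 hp1 hmean (t0 + ε) r0 hr0'.1 hr0lt).tendsto.eventually_const_lt h2
    obtain ⟨δ, hδpos, hδ⟩ := Metric.eventually_nhds_iff.mp (e1.and e2)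
    refine ⟨δ, hδpos, ?_⟩
    intro x hx hdist
    have hx' : x ∈ Set.Ioc (0:ℝ) r1 := hmemIcc x hx
    obtain ⟨hxa, hxb⟩ := hδ hdist
    have hA : t0 - ε < tf x := by
      by_contra hcon2
      push_neg at hcon2
      have h3 := (hmono x hx').monotone hcon2
      rw [htf x hx'] at h3
      linarith
    have hB : tf x < t0 + ε := by
      by_contra hcon2
      push_neg at hcon2
      have h3 := (hmono x hx').monotone hcon2
      rw [htf x hx'] at h3
      linarith
    rw [Real.dist_eq, abs_sub_lt_iff]
    constructor <;> [linarith; linarith]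
  -- continuity of M
  have hWcont : ContinuousOn (fun r : ℝ => Wc r (tf r)) (Set.Icc r2 r1) := by
    have h1 : ContinuousOn (fun r : ℝ => ((tf r : ℝ) : ℂ) * Complex.I) (Set.Icc r2 r1) :=
      (Complex.continuous_ofReal.comp_continuousOn htfc).mul continuousOn_const
    have h2 : ContinuousOn (fun r : ℝ => Complex.exp (((tf r : ℝ) : ℂ) * Complex.I))
        (Set.Icc r2 r1) := Complex.continuous_exp.comp_continuousOn h1
    exact (Complex.continuous_ofReal.continuousOn).mul h2
  have hMc : ContinuousOn M (Set.Icc r2 r1) := by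
    apply ContinuousOn.div continuous_id.continuousOn
    · exact continuous_norm.comp_continuousOn
        ((continuous_fC (p := p) (m := m)).comp_continuousOn hWcont)
    · intro x hx
      simp only [ne_eq, norm_eq_zero]
      exact hfCne x (hmemIcc x hx) (tf x)
  -- IVT
  obtain ⟨rs, hrsmem, hMrs⟩ := intermediate_value_Icc hr2le hMc ⟨hMr2, hMr1v⟩
  have hrs' : rs ∈ Set.Ioc (0:ℝ) r1 := hmemIcc rs hrsmem
  -- polar representation
  have hpolar : ∀ r, r ∈ Set.Ioc (0:ℝ) r1 →
      Wc r (tf r) / fC m p (Wc r (tf r)) = ↑(M r) * Complex.exp ((α : ℂ) * Complex.I) := by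
    intro r hr
    set ζ := fC m p (Wc r (tf r)) with hζdef
    have hζne : ζ ≠ 0 := hfCne r hr (tf r)
    have hζabs : (‖ζ‖ : ℂ) ≠ 0 := by
      simp only [ne_eq, Complex.ofReal_eq_zero, norm_eq_zero]; exact hζne
    have hζrep : ζ = ↑(‖ζ‖) * Complex.exp (↑(Complex.arg ζ) * Complex.I) :=
      (Complex.norm_mul_exp_arg_mul_I ζ).symm
    have hαval : tf r - Complex.arg ζ = α := by
      have h1 := htf r hr
      rw [Th] at h1
      rw [← Complex.log_im ζ]
      exact h1
    calc Wc r (tf r) / ζ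
        = ((r : ℂ) * Complex.exp ((tf r : ℂ) * Complex.I)) /
          (↑(‖ζ‖) * Complex.exp (↑(Complex.arg ζ) * Complex.I)) := by
          rw [← hζrep]; rfl
      _ = ((r : ℂ) / ↑(‖ζ‖)) *
          (Complex.exp ((tf r : ℂ) * Complex.I) / Complex.exp (↑(Complex.arg ζ) * Complex.I)) := by
          rw [mul_div_mul_comm]
      _ = ↑(M r) * Complex.exp ((tf r : ℂ) * Complex.I - ↑(Complex.arg ζ) * Complex.I) := by
          rw [← Complex.exp_sub, hMdef, Complex.ofReal_div]
      _ = ↑(M r) * Complex.exp ((α : ℂ) * Complex.I) := by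
          congr 1
          rw [← hαval]
          push_cast
          ring
  set ws : ℂ := Wc rs (tf rs) with hwsdef
  have hwsne : ws ≠ 0 := by
    rw [hwsdef, Wc]
    exact mul_ne_zero (by simp [ne_of_gt hrs'.1]) (Complex.exp_ne_zero _)
  have hwsabs : ‖ws‖ = rs := abs_Wc rs (tf rs) hrs'.1.le
  have hfCwsne : fC m p ws ≠ 0 := hfCne rs hrs' (tf rs)
  have hkey : ws / fC m p ws = (z : ℂ)⁻¹ := by
    have hA := hpolar rs hrs'
    have hB := hpolar r1 hmemr1
    rw [htf1, hW1] at hB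
    have hw1fc : w1 / fC m p w1 = ((↑s : ℂ) * z)⁻¹ := by
      rw [hfw1]
      field_simp
    rw [← hwsdef] at hA
    rw [hA, hMrs, hvdef]
    rw [hw1fc] at hB
    have : ((s * M r1 : ℝ) : ℂ) = (↑s : ℂ) * ↑(M r1) := by push_cast; ring
    rw [this, mul_assoc, ← hB, mul_inv]
    rw [← mul_assoc, mul_comm ((↑s:ℂ)) ((↑s:ℂ))⁻¹, inv_mul_cancel₀ hsC, one_mul]
  have hfinal : fC m p ws = z * ws := by
    have h1 : ws = z⁻¹ * fC m p ws := by
      rw [← hkey]; field_simp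
    calc fC m p ws = z * (z⁻¹ * fC m p ws) := by
          rw [← mul_assoc, mul_inv_cancel₀ hzne, one_mul]
      _ = z * ws := by rw [← h1]
  -- contradiction with hz
  have habsinv : 1 < ‖(ws)⁻¹‖ := by
    rw [norm_inv, hwsabs]
    rw [one_lt_inv_iff₀]
    exact ⟨hrs'.1, lt_of_le_of_lt hrs'.2 hr1lt⟩
  apply hz (ws)⁻¹ habsinv
  rw [psi_eq (p := p) (m := m) (ws)⁻¹ (inv_ne_zero hwsne), inv_inv, hfinal,
    mul_comm z ws, ← mul_assoc, inv_mul_cancel₀ hwsne, one_mul]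

end StabAux

/-- The stability region Γ := ℂ \ ψ({|r| > 1}), where
ψ(r) = Σ_{j=0}^m p_j r^{1−j}, is radially convex (star-shaped with respect to the origin):
0 ∈ Γ, and for every z ∈ Γ and every s ∈ [0, 1], the point s·z belongs to Γ. -/
theorem stmt_2
    (m : ℕ) (hm : 2 ≤ m)
    (p : ℕ → ℝ)
    (hp_nonneg : ∀ j, 0 ≤ p j)
    (hp_sum : ∑ j ∈ Finset.range (m + 1), p j = 1)
    (hp0 : 0 < p 0)
    (hp1 : p 1 = 0)
    (hmean : ∑ j ∈ Finset.range (m + 1), (1 - (j : ℝ)) * p j = 0)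
    (Γ : Set ℂ)
    (hΓ : Γ = {z : ℂ | ∀ r : ℂ, 1 < ‖r‖ →
      z ≠ ∑ j ∈ Finset.range (m + 1), (p j : ℂ) * r ^ ((1 : ℤ) - (j : ℤ))}) :
    (0 : ℂ) ∈ Γ ∧ ∀ z ∈ Γ, ∀ s : ℝ, s ∈ Set.Icc (0 : ℝ) 1 → (s : ℂ) * z ∈ Γ :=
  StabAux.main hm hp_nonneg hp_sum hp0 hp1 hmean Γ hΓ

end
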